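/- Let R be a commutative ring and x ∈ R an element with bounded x-torsion, i.e. there exists N such that ⋃_{k≥0} Ann(x^k) = Ann(x^N). Then the commutative square formed by R, the localization R[x⁻¹], the x-adic completion R^∧_x, and R^∧_x[x⁻¹] (with the canonical maps) is a pullback square; that is, R is isomorphic to the fiber product of R[x⁻¹] and R^∧_x over R^∧_x[x⁻¹]. -/

import Mathlib

open AdicCompletion

section
variable {R : Type*} [CommRing R] (x : R) (N : ℕ)

private lemma mk_eq_iff (n : ℕ) (r s : R) :
    Ideal.Quotient.mk ((Ideal.span {x})^n) r = Ideal.Quotient.mk ((Ideal.span {x})^n) s ↔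
      x^n ∣ (r - s) := by
  rw [Ideal.Quotient.mk_eq_mk_iff_sub_mem, Ideal.span_singleton_pow, Ideal.mem_span_singleton]

private lemma adic_ext {I : Ideal R} {a b : AdicCompletion I R}
    (h : ∀ n, evalₐ I n a = evalₐ I n b) : a = b := by
  apply AdicCompletion.ext
  intro n
  have h1 := h n
  simp only [evalₐ, AlgHom.comp_apply] at h1
  have h2 := (Ideal.quotientEquivAlgOfEq R
    (by ext y; simp : (I ^ n • ⊤ : Ideal R) = I ^ n)).injective h1
  exact h2

private lemma evalₐ_pow_mul_mk (i k : ℕ) (f : AdicCauchySequence (Ideal.span {x}) R) :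
    evalₐ (Ideal.span {x}) i
        ((algebraMap R (AdicCompletion (Ideal.span {x}) R) x)^k *
          AdicCompletion.mk (Ideal.span {x}) R f) =
      Ideal.Quotient.mk ((Ideal.span {x})^i) (x^k * f.val i) := by
  rw [map_mul, map_pow, (evalₐ (Ideal.span {x}) i).commutes, evalₐ_mk,
    Ideal.Quotient.algebraMap_eq, ← map_pow, ← map_mul]

private lemma cauchy_dvd (f : AdicCauchySequence (Ideal.span {x}) R) {m n : ℕ} (h : m ≤ n) :
    x^m ∣ (f.val n - f.val m) := by
  rw [← mk_eq_iff]
  exact AdicCompletion.Ideal.mk_eq_mk (Ideal.span {x}) h f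

variable (hbdd : ∀ (k : ℕ) (r : R), r * x ^ k = 0 → r * x ^ N = 0)

include hbdd in
/-- Lemma A : bounded torsion in the completion -/
private lemma tors_bdd (k : ℕ) (d : AdicCompletion (Ideal.span {x}) R)
    (h : (algebraMap R (AdicCompletion (Ideal.span {x}) R) x)^k * d = 0) :
    (algebraMap R (AdicCompletion (Ideal.span {x}) R) x)^N * d = 0 := by
  obtain ⟨f, rfl⟩ := AdicCompletion.mk_surjective (Ideal.span {x}) R d
  apply adic_ext
  intro i
  rw [evalₐ_pow_mul_mk, _root_.map_zero]
  have h1 : evalₐ (Ideal.span {x}) (i+k)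
      ((algebraMap R (AdicCompletion (Ideal.span {x}) R) x)^k *
        AdicCompletion.mk (Ideal.span {x}) R f) = 0 := by rw [h, _root_.map_zero]
  rw [evalₐ_pow_mul_mk, ← sub_zero (x^k * f.val (i+k)),
    ← map_zero (Ideal.Quotient.mk ((Ideal.span {x})^(i+k))), mk_eq_iff] at h1
  obtain ⟨e, he⟩ := h1
  have h2 : (f.val (i+k) - x^i * e) * x^k = 0 := by linear_combination he
  have h3 := hbdd k _ h2
  have h4 : Ideal.Quotient.mk ((Ideal.span {x})^i) (x^N * f.val i) =
      Ideal.Quotient.mk ((Ideal.span {x})^i) (x^N * f.val (i+k)) := by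
    rw [map_mul, map_mul, AdicCompletion.Ideal.mk_eq_mk (Ideal.span {x}) (Nat.le_add_right i k)]
  rw [h4, ← sub_zero (x^N * f.val (i+k)), ← map_zero (Ideal.Quotient.mk ((Ideal.span {x})^i)),
    mk_eq_iff]
  exact ⟨x^N * e, by linear_combination h3⟩

include hbdd in
/-- Lemma B : `x^N`-torsion elements of the completion come from `x^N`-torsion in `R`. -/
private lemma tors_lift (d : AdicCompletion (Ideal.span {x}) R)
    (h : (algebraMap R (AdicCompletion (Ideal.span {x}) R) x)^N * d = 0) :
    ∃ e : R, e * x^N = 0 ∧ algebraMap R (AdicCompletion (Ideal.span {x}) R) e = d := by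
  obtain ⟨f, rfl⟩ := AdicCompletion.mk_surjective (Ideal.span {x}) R d
  have hdvd : ∀ i, ∃ u, x^N * f.val i = x^i * u := by
    intro i
    have h' : x^i ∣ (x^N * f.val i - 0) := by
      rw [← mk_eq_iff, _root_.map_zero, ← evalₐ_pow_mul_mk, h, _root_.map_zero]
    obtain ⟨u, hu⟩ := h'
    exact ⟨u, by linear_combination hu⟩
  choose u hu using hdvd
  set E : ℕ → R := fun i => f.val (N+i) - x^i * u (N+i) with hE
  have hE0 : ∀ i, E i * x^N = 0 := by
    intro i
    simp only [hE]
    linear_combination hu (N+i)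
  have hstab : ∀ i, N ≤ i → E (i+1) = E i := by
    intro i hNi
    obtain ⟨j, rfl⟩ := Nat.exists_eq_add_of_le hNi
    obtain ⟨v, hv⟩ := cauchy_dvd x f (Nat.le_succ (N+(N+j)))
    set w : R := x^N * v - x * u (N+(N+j)+1) + u (N+(N+j)) with hwdef
    have hEw : E (N+j+1) - E (N+j) = x^(N+j) * w := by
      simp only [hE, hwdef]
      have : N + (N + j + 1) = N + (N+j) + 1 := by ring
      rw [this]
      linear_combination hv
    have hw0 : w * x^(N + (N+j)) = 0 := by
      have := hE0 (N+j+1)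
      have h2 := hE0 (N+j)
      have : (E (N+j+1) - E (N+j)) * x^N = 0 := by
        rw [sub_mul, this, h2, sub_zero]
      rw [hEw] at this
      linear_combination this
    have hwN := hbdd (N+(N+j)) w hw0
    linear_combination hEw + x^j * hwN
  have hconst : ∀ j, E (N + j) = E N := by
    intro j
    induction j with
    | zero => rfl
    | succ j ih => rw [show N + (j+1) = (N+j)+1 from rfl, hstab (N+j) (Nat.le_add_right N j), ih]
  refine ⟨E N, hE0 N, ?_⟩
  apply adic_ext
  intro j
  rw [(evalₐ (Ideal.span {x}) j).commutes, Ideal.Quotient.algebraMap_eq, evalₐ_mk, mk_eq_iff]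
  rw [← hconst j]
  obtain ⟨v, hv⟩ := cauchy_dvd x f (show j ≤ N + (N + j) by omega)
  exact ⟨v - x^N * u (N+(N+j)), by simp only [hE]; linear_combination hv⟩end

/-- Strickland: Let `R` be a commutative ring and `x ∈ R` with bounded
`x`-torsion (there is `N` with `⋃_k Ann(x^k) = Ann(x^N)`).  Then the square formed by
`R`, the localization `R[x⁻¹]`, the `x`-adic completion `R^∧_x`, and `R^∧_x[x⁻¹]` is a
pullback: every compatible pair of elements of `R[x⁻¹]` and `R^∧_x` comes from a unique
element of `R`. -/
theorem stmt_0 (R : Type*) [CommRing R] (x : R)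
    (N : ℕ)
    (hbdd : ∀ (k : ℕ) (r : R), r * x ^ k = 0 → r * x ^ N = 0)
    (hunit : IsUnit
      (((algebraMap (AdicCompletion (Ideal.span {x}) R)
          (Localization.Away
            (algebraMap R (AdicCompletion (Ideal.span {x}) R) x))).comp
        (algebraMap R (AdicCompletion (Ideal.span {x}) R))) x)) :
    ∀ (a : Localization.Away x) (b : AdicCompletion (Ideal.span {x}) R),
      Localization.awayLift
          ((algebraMap (AdicCompletion (Ideal.span {x}) R)
            (Localization.Away
              (algebraMap R (AdicCompletion (Ideal.span {x}) R) x))).comp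
          (algebraMap R (AdicCompletion (Ideal.span {x}) R))) x hunit a =
        algebraMap (AdicCompletion (Ideal.span {x}) R)
          (Localization.Away
            (algebraMap R (AdicCompletion (Ideal.span {x}) R) x)) b →
      ∃! r : R,
        algebraMap R (Localization.Away x) r = a ∧
        algebraMap R (AdicCompletion (Ideal.span {x}) R) r = b := by
  intro a b hab
  obtain ⟨⟨r₀, y⟩, ha⟩ := IsLocalization.mk'_surjective (Submonoid.powers x) a
  simp only at ha
  obtain ⟨n, hy⟩ := y.prop
  rw [← ha] at hab
  rw [show Localization.awayLift
        ((algebraMap (AdicCompletion (Ideal.span {x}) R)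
          (Localization.Away (algebraMap R (AdicCompletion (Ideal.span {x}) R) x))).comp
          (algebraMap R (AdicCompletion (Ideal.span {x}) R))) x hunit =
      IsLocalization.lift (S := Localization.Away x)
        (g := ((algebraMap (AdicCompletion (Ideal.span {x}) R)
          (Localization.Away (algebraMap R (AdicCompletion (Ideal.span {x}) R) x))).comp
          (algebraMap R (AdicCompletion (Ideal.span {x}) R))))
        (fun (y : Submonoid.powers x) => by
          obtain ⟨n, hn⟩ := y.2
          rw [← hn, map_pow]
          exact hunit.pow n) from rfl, IsLocalization.lift_mk'_spec] at hab
  rw [RingHom.comp_apply, RingHom.comp_apply, ← hy, map_pow, map_pow] at hab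
  have key : algebraMap (AdicCompletion (Ideal.span {x}) R)
        (Localization.Away (algebraMap R (AdicCompletion (Ideal.span {x}) R) x))
        (algebraMap R (AdicCompletion (Ideal.span {x}) R) r₀) =
      algebraMap (AdicCompletion (Ideal.span {x}) R)
        (Localization.Away (algebraMap R (AdicCompletion (Ideal.span {x}) R) x))
        ((algebraMap R (AdicCompletion (Ideal.span {x}) R) x)^n * b) := by
    rw [map_mul, map_pow]
    exact hab
  rw [IsLocalization.eq_iff_exists
    (Submonoid.powers (algebraMap R (AdicCompletion (Ideal.span {x}) R) x))] at key
  obtain ⟨c, hc⟩ := key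
  obtain ⟨m, hm⟩ := c.prop
  rw [← hm] at hc
  have hs : algebraMap R (AdicCompletion (Ideal.span {x}) R) (x^m * r₀) =
      (algebraMap R (AdicCompletion (Ideal.span {x}) R) x)^(m+n) * b := by
    rw [map_mul, map_pow, pow_add, mul_assoc]
    exact hc
  clear hc hab hunit
  obtain ⟨fb, rfl⟩ := AdicCompletion.mk_surjective (Ideal.span {x}) R b
  -- extract the quotient `c₁` of `s = x^m r₀` by `x^(m+n)`
  have hlev : x^(m+n+1) ∣ (x^m * r₀ - x^(m+n) * fb.val (m+n+1)) := by
    rw [← mk_eq_iff]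
    have h1 := congrArg (evalₐ (Ideal.span {x}) (m+n+1)) hs
    rwa [(evalₐ (Ideal.span {x}) (m+n+1)).commutes, Ideal.Quotient.algebraMap_eq,
      evalₐ_pow_mul_mk] at h1
  obtain ⟨t, ht⟩ := hlev
  have hc₁ : x^m * r₀ = x^(m+n) * (fb.val (m+n+1) + x*t) := by linear_combination ht
  have hd : (algebraMap R (AdicCompletion (Ideal.span {x}) R) x)^(m+n) *
      (AdicCompletion.mk (Ideal.span {x}) R fb -
        algebraMap R (AdicCompletion (Ideal.span {x}) R) (fb.val (m+n+1) + x*t)) = 0 := by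
    have h2 : (algebraMap R (AdicCompletion (Ideal.span {x}) R) x)^(m+n) *
        algebraMap R (AdicCompletion (Ideal.span {x}) R) (fb.val (m+n+1) + x*t) =
        (algebraMap R (AdicCompletion (Ideal.span {x}) R) x)^(m+n) *
          AdicCompletion.mk (Ideal.span {x}) R fb := by
      rw [← map_pow, ← map_mul, ← hc₁, hs, map_pow]
    rw [mul_sub, h2, sub_self]
  have hdN := tors_bdd x N hbdd (m+n) _ hd
  obtain ⟨e, he0, heb⟩ := tors_lift x N hbdd _ hdN
  -- the candidate element
  have hrcomp : algebraMap R (AdicCompletion (Ideal.span {x}) R) ((fb.val (m+n+1) + x*t) + e) =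
      AdicCompletion.mk (Ideal.span {x}) R fb := by
    rw [map_add, heb]
    ring
  have hrloc : algebraMap R (Localization.Away x) ((fb.val (m+n+1) + x*t) + e) = a := by
    rw [← ha]
    refine (IsLocalization.eq_mk'_iff_mul_eq (M := Submonoid.powers x)
      (S := Localization.Away x)).mpr ?_
    rw [← hy]
    beta_reduce
    rw [← map_mul, IsLocalization.eq_iff_exists (Submonoid.powers x)]
    refine ⟨⟨x^(m+N), m+N, rfl⟩, ?_⟩
    show x^(m+N) * (((fb.val (m+n+1) + x*t) + e) * x^n) = x^(m+N) * r₀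
    linear_combination x^(m+n) * he0 - x^N * hc₁
  refine ⟨(fb.val (m+n+1) + x*t) + e, ⟨hrloc, hrcomp⟩, ?_⟩
  rintro r' ⟨h1', h2'⟩
  have hL : algebraMap R (Localization.Away x) (r' - ((fb.val (m+n+1) + x*t) + e)) = 0 := by
    rw [map_sub, h1', hrloc, sub_self]
  rw [IsLocalization.map_eq_zero_iff (Submonoid.powers x)] at hL
  obtain ⟨cc, hcc⟩ := hL
  obtain ⟨j, hj⟩ := cc.prop
  rw [← hj] at hcc
  have hN : (r' - ((fb.val (m+n+1) + x*t) + e)) * x^N = 0 :=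
    hbdd j _ (by linear_combination hcc)
  have hC : algebraMap R (AdicCompletion (Ideal.span {x}) R)
      (r' - ((fb.val (m+n+1) + x*t) + e)) = 0 := by
    rw [map_sub, h2', hrcomp, sub_self]
  have hq : x^(N+1) ∣ (r' - ((fb.val (m+n+1) + x*t) + e) - 0) := by
    rw [← mk_eq_iff, _root_.map_zero]
    have h3 := congrArg (evalₐ (Ideal.span {x}) (N+1)) hC
    rwa [(evalₐ (Ideal.span {x}) (N+1)).commutes, Ideal.Quotient.algebraMap_eq,
      _root_.map_zero] at h3
  obtain ⟨w, hw⟩ := hq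
  have hwk : w * x^(N+1+N) = 0 := by linear_combination hN - x^N * hw
  have hwN := hbdd (N+1+N) w hwk
  linear_combination hw + x * hwN
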